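/- arXiv:2106.05999 — 2 statements merged into one kernel-verified Lean document; each statement's English description precedes it below -/
import Mathlib

section
/- Let G (generators) and U (uncertainty sources) be nonempty finite sets, let σ : U × U → ℝ with s² := Σ_{v,w ∈ U} σ_{vw} > 0 and s := √(s²). For each i ∈ G let αᵢ > 0 and let c₂ᵢ, zᵢ, δ̄ᵢ, δ̲ᵢ be real numbers. Define for each u ∈ U the nodal balancing price χ_u := (1/|G|)·Σ_{i∈G} (Σ_{v∈U} αᵢ·σ_{uv})·(2c₂ᵢ + (zᵢ/(αᵢ·s))·(δ̄ᵢ + δ̲ᵢ)) and the system-wide balancing price χ := (1/|G|)·Σ_{i∈G} (2c₂ᵢ·s²·αᵢ + zᵢ·s·(δ̄ᵢ + δ̲ᵢ)). Then for every u ∈ U, χ_u = β_u·χ with β_u = (Σ_{v∈U} σ_{uv})/s², and moreover Σ_{u∈U} β_u = 1, hence Σ_{u∈U} χ_u = χ. -/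
open Finset

/-- Relationship between nodal (LBP) and system-wide balancing prices under
symmetric balancing: `χᵤ = βᵤ · χ` with `βᵤ = (∑ᵥ σᵤᵥ)/s²`, `∑ᵤ βᵤ = 1`, and
hence `∑ᵤ χᵤ = χ`. -/
theorem nodal_vs_systemwide_balancing_price
    {G U : Type*} [Fintype G] [Fintype U] [Nonempty G] [Nonempty U]
    (σ : U → U → ℝ) (s : ℝ)
    (hs2 : 0 < ∑ v, ∑ w, σ v w)
    (hs : s = Real.sqrt (∑ v, ∑ w, σ v w))
    (α : G → ℝ) (hα : ∀ i, 0 < α i)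
    (c₂ z δbar δunder : G → ℝ)
    (χnod : U → ℝ)
    (hχnod : ∀ u, χnod u = (1 / (Fintype.card G : ℝ)) *
      ∑ i, (∑ v, α i * σ u v) *
        (2 * c₂ i + (z i / (α i * s)) * (δbar i + δunder i)))
    (χ : ℝ)
    (hχ : χ = (1 / (Fintype.card G : ℝ)) *
      ∑ i, (2 * c₂ i * (∑ v, ∑ w, σ v w) * α i + z i * s * (δbar i + δunder i)))
    (β : U → ℝ)
    (hβ : ∀ u, β u = (∑ v, σ u v) / (∑ v, ∑ w, σ v w)) :
    (∀ u, χnod u = β u * χ) ∧ (∑ u, β u) = 1 ∧ (∑ u, χnod u) = χ := by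
  set S : ℝ := ∑ v, ∑ w, σ v w with hS
  have hspos : 0 < s := hs ▸ Real.sqrt_pos.mpr hs2
  have hss : s * s = S := by
    rw [hs]; exact Real.mul_self_sqrt hs2.le
  have hsne : s ≠ 0 := hspos.ne'
  have hSne : S ≠ 0 := hs2.ne'
  have key : ∀ u, χnod u = β u * χ := by
    intro u
    rw [hχnod, hβ, hχ]
    rw [mul_comm ((∑ v, σ u v) / S), mul_assoc]
    congr 1
    rw [Finset.sum_mul]
    refine Finset.sum_congr rfl fun i _ => ?_
    have hαne : α i ≠ 0 := (hα i).ne'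
    rw [← Finset.mul_sum, ← hss]
    field_simp
  have hbsum : (∑ u, β u) = 1 := by
    simp only [hβ]
    rw [← Finset.sum_div, div_eq_one_iff_eq hSne]
  refine ⟨key, hbsum, ?_⟩
  calc (∑ u, χnod u) = ∑ u, β u * χ := by simp [key]
    _ = (∑ u, β u) * χ := by rw [Finset.sum_mul]
    _ = χ := by rw [hbsum, one_mul]
end

section
/- Let G and U be finite sets and fix u ∈ U. Let w_u > 0, κ_u ∈ ℝ, ζ : U × U → ℝ, and for each v ∈ U let σ_v ∈ ℝ with σ_u = κ_u·w_u; define σ_{uv} := ζ_{uv}·σ_u·σ_v. For each i ∈ G let α_{iu}, α_{iv} ∈ ℝ, Sᵢ ≠ 0, and c₂ᵢ, zᵢ, δ̄ᵢ, δ̲ᵢ ∈ ℝ. Define the marginal RES cost rate c_u := Σ_{i∈G} ((Σ_{v∈U} α_{iu}·α_{iv}·ζ_{uv}·κ_u·σ_v)/Sᵢ)·(2c₂ᵢ·Sᵢ + zᵢ·(δ̄ᵢ + δ̲ᵢ)). Then the marginal-cost-based RES operating cost equals the balancing-payment-based cost: w_u·c_u = Σ_{i∈G} α_{iu}·((Σ_{v∈U}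 α_{iv}·σ_{uv})/Sᵢ)·(2c₂ᵢ·Sᵢ + zᵢ·(δ̄ᵢ + δ̲ᵢ)). -/
open Finset

/-- Cost equivalence between the marginal-cost-based RES operating cost
`wᵤ · cᵤ` and the balancing-payment-based compensating cost `C^αᵤ`. -/
theorem res_cost_equivalence
    {G U : Type*} [Fintype G] [Fintype U] (u : U)
    (w : U → ℝ) (hw : 0 < w u) (κ : U → ℝ)
    (ζ : U → U → ℝ) (σ : U → ℝ) (hσu : σ u = κ u * w u)
    (σ2 : U → U → ℝ) (hσ2 : ∀ v v' : U, σ2 v v' = ζ v v' * σ v * σ v')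
    (α : G → U → ℝ) (S : G → ℝ) (hS : ∀ i, S i ≠ 0)
    (c₂ z δbar δunder : G → ℝ)
    (c : U → ℝ)
    (hc : c u = ∑ i, ((∑ v, α i u * α i v * ζ u v * κ u * σ v) / S i) *
      (2 * c₂ i * S i + z i * (δbar i + δunder i))) :
    w u * c u = ∑ i, α i u * ((∑ v, α i v * σ2 u v) / S i) *
      (2 * c₂ i * S i + z i * (δbar i + δunder i)) := by
  rw [hc, mul_sum]
  refine sum_congr rfl fun i _ => ?_
  have h1 : ∑ v, α i v * σ2 u v = w u * ∑ v, α i v * ζ u v * κ u * σ v := by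
    rw [mul_sum]
    refine sum_congr rfl fun v _ => ?_
    rw [hσ2, hσu]; ring
  have h2 : ∑ v, α i u * α i v * ζ u v * κ u * σ v
      = α i u * ∑ v, α i v * ζ u v * κ u * σ v := by
    rw [mul_sum]
    exact sum_congr rfl fun v _ => by ring
  rw [h1, h2]; ring
end
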